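/- Let T : X → X be a continuous map of a compact metric space, φ : X → ℝ continuous, and ε > 0. If there exist a sequence of integers n_i → ∞ and points x_i ∈ X with (1/n_i) Σ_{k=0}^{n_i-1} φ(T^k(x_i)) ≥ ε for every i, then there exists a point x ∈ X such that the Birkhoff average lim_{n→∞} (1/n) Σ_{k=0}^{n-1} φ(T^k(x)) exists and is ≥ ε. -/

import Mathlib

open Filter

/-- If finite-time Birkhoff averages of `φ` along some points are at least `ε` for arbitrarily
large times, then there is a single point whose (infinite-time) Birkhoff average exists and is
at least `ε`. -/
theorem exists_orbit_birkhoff_average_ge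
    {X : Type*} [MetricSpace X] [CompactSpace X]
    [MeasurableSpace X] [BorelSpace X]
    (T : X → X) (hT : Continuous T)
    (φ : X → ℝ) (hφ : Continuous φ) (ε : ℝ) (hε : 0 < ε)
    (n : ℕ → ℕ) (hn : Tendsto n atTop atTop) (x : ℕ → X)
    (hbig : ∀ i : ℕ,
      ε ≤ (n i : ℝ)⁻¹ * ∑ k ∈ Finset.range (n i), φ (T^[k] (x i))) :
    ∃ (z : X) (L : ℝ),
      Tendsto (fun m : ℕ => (m : ℝ)⁻¹ * ∑ k ∈ Finset.range m, φ (T^[k] z))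
        atTop (nhds L) ∧ ε ≤ L := by
  have hX : Nonempty X := ⟨x 0⟩
  set S : ℕ → X → ℝ := fun m z => ∑ k ∈ Finset.range m, φ (T^[k] z) with hSdef
  have hScont : ∀ m, Continuous (S m) := by
    intro m
    exact continuous_finset_sum _ fun k _ => hφ.comp (hT.iterate k)
  have hSadd : ∀ (m r : ℕ) (z : X), S (m + r) z = S m z + S r (T^[m] z) := fun m r z =>
    birkhoffSum_add T φ m r z
  -- maximizing points
  have hmax : ∀ m : ℕ, ∃ w : X, ∀ v : X, S m v ≤ S m w := by
    intro m
    obtain ⟨w, -, hw⟩ :=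
      isCompact_univ.exists_isMaxOn Set.univ_nonempty (hScont m).continuousOn
    exact ⟨w, fun v => hw (Set.mem_univ v)⟩
  choose y hy using hmax
  set a : ℕ → ℝ := fun m => S m (y m) with ha
  have hsub : Subadditive a := by
    intro m k
    calc a (m + k) = S m (y (m + k)) + S k (T^[m] (y (m + k))) := hSadd m k _
    _ ≤ a m + a k := add_le_add (hy m _) (hy k _)
  -- uniform bound on φ
  obtain ⟨w₀, -, hw₀⟩ :=
    isCompact_univ.exists_isMaxOn Set.univ_nonempty hφ.abs.continuousOn
  set C₀ : ℝ := |φ w₀| with hC₀def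
  have hC₀ : 0 ≤ C₀ := abs_nonneg _
  have hφbd : ∀ v, |φ v| ≤ C₀ := fun v => hw₀ (Set.mem_univ v)
  have hSbd : ∀ (m : ℕ) (v : X), |S m v| ≤ m * C₀ := by
    intro m v
    calc |S m v| ≤ ∑ k ∈ Finset.range m, |φ (T^[k] v)| := Finset.abs_sum_le_sum_abs _ _
    _ ≤ ∑ _k ∈ Finset.range m, C₀ := Finset.sum_le_sum fun k _ => hφbd _
    _ = m * C₀ := by simp [Finset.sum_const, nsmul_eq_mul]
  have hbdd : BddBelow (Set.range fun m : ℕ => a m / m) := by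
    refine ⟨-C₀, ?_⟩
    rintro _ ⟨m, rfl⟩
    rcases Nat.eq_zero_or_pos m with hm | hm
    · subst hm; simpa [ha, hSdef] using hC₀
    · have hm' : (0 : ℝ) < m := by exact_mod_cast hm
      rw [le_div_iff₀ hm']
      have h1 := hSbd m (y m)
      have h2 := neg_abs_le (a m)
      have : -(m * C₀) ≤ a m := by
        have := (abs_le.1 h1).1
        exact this.trans_eq rfl |>.trans_eq rfl
      nlinarith
  set α : ℝ := hsub.lim with hαdef
  have hα : Tendsto (fun m : ℕ => a m / m) atTop (nhds α) := hsub.tendsto_lim hbdd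
  -- ε ≤ α
  have hεα : ε ≤ α := by
    have h1 : Tendsto (fun i => a (n i) / (n i)) atTop (nhds α) := hα.comp hn
    refine ge_of_tendsto h1 ?_
    filter_upwards [hn.eventually_ge_atTop 1] with i hi
    have hpos : (0 : ℝ) < (n i : ℝ) := by exact_mod_cast hi
    have h2 : ε ≤ (n i : ℝ)⁻¹ * S (n i) (x i) := hbig i
    have h3 : S (n i) (x i) ≤ a (n i) := hy _ _
    calc ε ≤ (n i : ℝ)⁻¹ * S (n i) (x i) := h2
    _ ≤ (n i : ℝ)⁻¹ * a (n i) := by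
        exact mul_le_mul_of_nonneg_left h3 (inv_nonneg.2 hpos.le)
    _ = a (n i) / n i := by rw [div_eq_inv_mul]
  -- key claim
  have key : ∀ δ : ℝ, 0 < δ → ∃ z : X, ∀ m : ℕ, 1 ≤ m → (m : ℝ) * (α - δ) ≤ S m z := by
    intro δ hδ
    by_contra hcon
    push_neg at hcon
    set U : ℕ → Set X := fun m => {z | S (m + 1) z < ((m + 1 : ℕ) : ℝ) * (α - δ)} with hU
    have hUopen : ∀ m, IsOpen (U m) := fun m =>
      isOpen_lt (hScont (m + 1)) continuous_const
    have hcover : Set.univ ⊆ ⋃ m, U m := by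
      intro z _
      obtain ⟨m, hm1, hmlt⟩ := hcon z
      obtain ⟨m', rfl⟩ : ∃ m', m = m' + 1 := ⟨m - 1, by omega⟩
      exact Set.mem_iUnion.2 ⟨m', hmlt⟩
    obtain ⟨t, ht⟩ := isCompact_univ.elim_finite_subcover U hUopen hcover
    set N : ℕ := t.sup id + 1 with hN
    have hstop : ∀ z : X, ∃ m, 1 ≤ m ∧ m ≤ N ∧ S m z < (m : ℝ) * (α - δ) := by
      intro z
      have hz := ht (Set.mem_univ z)
      simp only [Set.mem_iUnion, exists_prop] at hz
      obtain ⟨i, hit, hiz⟩ := hz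
      have hiN : i ≤ t.sup id := Finset.le_sup (f := id) hit
      exact ⟨i + 1, by omega, by omega, hiz⟩
    set C : ℝ := N * (C₀ + |α - δ|) with hC
    have hCnn : 0 ≤ C₀ + |α - δ| := add_nonneg hC₀ (abs_nonneg _)
    have main : ∀ nn : ℕ, ∀ z : X, S nn z ≤ nn * (α - δ) + C := by
      intro nn
      induction nn using Nat.strong_induction_on with
      | _ nn IH =>
        intro z
        by_cases hle : nn ≤ N
        · have h1 : S nn z ≤ nn * C₀ := (le_abs_self _).trans (hSbd nn z)
          have h2 : (nn : ℝ) ≤ N := by exact_mod_cast hle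
          have h3 : -|α - δ| ≤ α - δ := neg_abs_le _
          have h4 : (0 : ℝ) ≤ nn := Nat.cast_nonneg _
          nlinarith [mul_le_mul_of_nonneg_right h2 hCnn]
        · obtain ⟨m, hm1, hmN, hmlt⟩ := hstop z
          obtain ⟨r, rfl⟩ : ∃ r, nn = m + r := ⟨nn - m, by omega⟩
          have hr : r < m + r := by omega
          have hIH := IH r hr (T^[m] z)
          rw [hSadd m r z]
          have hcast : ((m + r : ℕ) : ℝ) = (m : ℝ) + (r : ℝ) := by push_cast; ring
          rw [hcast]
          nlinarith [hmlt, hIH]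
    have hub : ∀ᶠ nn : ℕ in atTop, a nn / nn ≤ (α - δ) + C / nn := by
      filter_upwards [eventually_ge_atTop 1] with nn h1
      have hpos : (0 : ℝ) < (nn : ℝ) := by exact_mod_cast h1
      have hm := main nn (y nn)
      rw [div_le_iff₀ hpos] at *
      calc a nn ≤ nn * (α - δ) + C := hm
      _ = ((α - δ) + C / nn) * nn := by field_simp
    have hlim2 : Tendsto (fun nn : ℕ => (α - δ) + C / nn) atTop (nhds (α - δ)) := by
      have h0 : Tendsto (fun nn : ℕ => C / nn) atTop (nhds 0) :=
        tendsto_const_div_atTop_nhds_zero_nat C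
      simpa using tendsto_const_nhds.add h0
    have : α ≤ α - δ := le_of_tendsto_of_tendsto hα hlim2 hub
    linarith
  -- nested compact sets
  set K : ℕ → Set X := fun j => {z | ∀ m : ℕ, 1 ≤ m → (m : ℝ) * (α - 1 / ((j : ℝ) + 1)) ≤ S m z}
    with hK
  have hKne : ∀ j, (K j).Nonempty := by
    intro j
    obtain ⟨z, hz⟩ := key (1 / ((j : ℝ) + 1)) (by positivity)
    exact ⟨z, hz⟩
  have hKclosed : ∀ j, IsClosed (K j) := by
    intro j
    have heq : K j = ⋂ (m : ℕ), ⋂ (_ : 1 ≤ m), {z | (m : ℝ) * (α - 1 / ((j : ℝ) + 1)) ≤ S m z} := by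
      ext z
      simp [hK, Set.mem_iInter]
    rw [heq]
    exact isClosed_iInter fun m => isClosed_iInter fun _ =>
      isClosed_le continuous_const (hScont m)
  have hKmono : ∀ j, K (j + 1) ⊆ K j := by
    intro j z hz m hm
    have h3 := hz m hm
    push_cast at h3
    have hm0 : (0 : ℝ) ≤ (m : ℝ) := Nat.cast_nonneg _
    have h2 : (m : ℝ) * (α - 1 / ((j : ℝ) + 1)) ≤ (m : ℝ) * (α - 1 / ((j : ℝ) + 1 + 1)) := by
      apply mul_le_mul_of_nonneg_left _ hm0
      have hdiv : (1 : ℝ) / ((j : ℝ) + 1 + 1) ≤ 1 / ((j : ℝ) + 1) := by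
        apply one_div_le_one_div_of_le
        · positivity
        · linarith
      linarith
    exact h2.trans h3
  obtain ⟨z, hzmem⟩ := IsCompact.nonempty_iInter_of_sequence_nonempty_isCompact_isClosed K
    hKmono hKne (hKclosed 0).isCompact hKclosed
  have hzlow : ∀ m : ℕ, 1 ≤ m → (m : ℝ) * α ≤ S m z := by
    intro m hm
    have hj : ∀ j : ℕ, (m : ℝ) * (α - 1 / ((j : ℝ) + 1)) ≤ S m z := by
      intro j
      exact (Set.mem_iInter.1 hzmem j) m hm
    have htend : Tendsto (fun j : ℕ => (m : ℝ) * (α - 1 / ((j : ℝ) + 1)))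
        atTop (nhds ((m : ℝ) * α)) := by
      have h0 : Tendsto (fun j : ℕ => 1 / ((j : ℝ) + 1)) atTop (nhds 0) :=
        tendsto_one_div_add_atTop_nhds_zero_nat
      have h1 : Tendsto (fun j : ℕ => α - 1 / ((j : ℝ) + 1)) atTop (nhds (α - 0)) :=
        (tendsto_const_nhds : Tendsto (fun _ : ℕ => α) atTop (nhds α)).sub h0
      have h2 := h1.const_mul (m : ℝ)
      simpa using h2
    exact le_of_tendsto htend (Eventually.of_forall hj)
  refine ⟨z, α, ?_, hεα⟩
  have hlow : ∀ᶠ m : ℕ in atTop, α ≤ (m : ℝ)⁻¹ * S m z := by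
    filter_upwards [eventually_ge_atTop 1] with m hm
    have hpos : (0 : ℝ) < (m : ℝ) := by exact_mod_cast hm
    have := hzlow m hm
    have heq : α = (m : ℝ)⁻¹ * ((m : ℝ) * α) := by
      field_simp
    rw [heq]
    exact mul_le_mul_of_nonneg_left (hzlow m hm) (inv_nonneg.2 hpos.le)
  have hup : ∀ᶠ m : ℕ in atTop, (m : ℝ)⁻¹ * S m z ≤ a m / m := by
    filter_upwards with m
    rw [div_eq_inv_mul]
    exact mul_le_mul_of_nonneg_left (hy m z) (inv_nonneg.2 (Nat.cast_nonneg _))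
  have : Tendsto (fun m : ℕ => (m : ℝ)⁻¹ * S m z) atTop (nhds α) :=
    tendsto_of_tendsto_of_tendsto_of_le_of_le' tendsto_const_nhds hα hlow hup
  exact this
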